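/- Let V be a finite set and let r assign a nonnegative integer r(uv) to each unordered pair of distinct vertices u, v ∈ V. Define f : 2^V → ℤ by f(S) = max { r(uv) : u ∈ S, v ∉ S } for ∅ ⊊ S ⊊ V, and f(∅) = f(V) = 0. Then f is skew-supermodular. -/
import Mathlib


open Finset

/-- Skew-supermodularity of an integer-valued set function. -/
def SkewSupermodular {V : Type*} [DecidableEq V] (f : Finset V → ℤ) : Prop :=
  ∀ A B : Finset V,
    f A + f B ≤ f (A ∩ B) + f (A ∪ B) ∨ f A + f B ≤ f (A \ B) + f (B \ A)

/-- The SNDP requirement function: given symmetric nonnegative requirements `r u v` on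
unordered pairs of distinct vertices, the function
`f(S) = max { r u v : u ∈ S, v ∉ S }` (with `f(∅) = f(V) = 0`, the max of the empty set
being `0`) is skew-supermodular. -/
theorem stmt6 {V : Type*} [Fintype V] [DecidableEq V]
    (r : V → V → ℕ) (hr : ∀ u v : V, r u v = r v u)
    (f : Finset V → ℤ)
    (hf : ∀ S : Finset V, f S = (((S ×ˢ Sᶜ).sup fun p => r p.1 p.2 : ℕ) : ℤ)) :
    SkewSupermodular f := by
  have hnn : ∀ S : Finset V, 0 ≤ f S := fun S => by
    rw [hf]; exact_mod_cast Nat.zero_le _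
  have hsep : ∀ (S : Finset V) (u v : V), u ∈ S → v ∉ S → (r u v : ℤ) ≤ f S := by
    intro S u v hu hv
    rw [hf]
    have hm : (u, v) ∈ S ×ˢ Sᶜ := Finset.mem_product.mpr ⟨hu, Finset.mem_compl.mpr hv⟩
    exact_mod_cast Finset.le_sup (f := fun p : V × V => r p.1 p.2) hm
  have hsep' : ∀ (S : Finset V) (u v : V), u ∉ S → v ∈ S → (r u v : ℤ) ≤ f S := by
    intro S u v hu hv; rw [hr]; exact hsep S v u hv hu
  have hwit : ∀ S : Finset V, f S = 0 ∨ ∃ u v, u ∈ S ∧ v ∉ S ∧ f S = (r u v : ℤ) := by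
    intro S
    rcases (S ×ˢ Sᶜ).eq_empty_or_nonempty with h | h
    · left; rw [hf, h]; simp
    · right
      obtain ⟨p, hp, hpe⟩ := Finset.exists_mem_eq_sup _ h (fun p : V × V => r p.1 p.2)
      rw [Finset.mem_product] at hp
      exact ⟨p.1, p.2, hp.1, by simpa using hp.2, by rw [hf, hpe]⟩
  have key : ∀ A B : Finset V, f B ≤ f A →
      (f A + f B ≤ f (A ∩ B) + f (A ∪ B) ∨ f A + f B ≤ f (A \ B) + f (B \ A)) := by
    intro A B hBA
    rcases hwit A with hA0 | ⟨a, a', ha, ha', hAr⟩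
    · left
      have := hnn (A ∩ B); have := hnn (A ∪ B)
      linarith
    · by_cases haB : a ∈ B <;> by_cases haB' : a' ∈ B
      · -- a ∈ B, a' ∈ B : f A ≤ f (A ∩ B) and f A ≤ f (B \ A)
        have h1 : f A ≤ f (A ∩ B) := by
          rw [hAr]
          exact hsep _ a a' (Finset.mem_inter.mpr ⟨ha, haB⟩)
            (fun h => ha' (Finset.mem_inter.mp h).1)
        have h2 : f A ≤ f (B \ A) := by
          rw [hAr]
          exact hsep' _ a a' (fun h => (Finset.mem_sdiff.mp h).2 ha)
            (Finset.mem_sdiff.mpr ⟨haB', ha'⟩)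
        rcases hwit B with hB0 | ⟨b, b', hb, hb', hBr⟩
        · left
          have := hnn (A ∪ B)
          linarith
        · by_cases hbA' : b' ∈ A
          · -- b' ∈ A \ B, so f B ≤ f (A \ B)
            right
            have h3 : f B ≤ f (A \ B) := by
              rw [hBr]
              exact hsep' _ b b' (fun h => (Finset.mem_sdiff.mp h).2 hb)
                (Finset.mem_sdiff.mpr ⟨hbA', hb'⟩)
            linarith
          · -- b' ∉ A ∪ B, so f B ≤ f (A ∪ B)
            left
            have h3 : f B ≤ f (A ∪ B) := by
              rw [hBr]
              exact hsep _ b b' (Finset.mem_union.mpr (Or.inr hb))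
                (fun h => (Finset.mem_union.mp h).elim hbA' hb')
            linarith
      · -- a ∈ B, a' ∉ B : separated by both A ∩ B and A ∪ B
        left
        have h1 : f A ≤ f (A ∩ B) := by
          rw [hAr]
          exact hsep _ a a' (Finset.mem_inter.mpr ⟨ha, haB⟩)
            (fun h => ha' (Finset.mem_inter.mp h).1)
        have h2 : f A ≤ f (A ∪ B) := by
          rw [hAr]
          exact hsep _ a a' (Finset.mem_union.mpr (Or.inl ha))
            (fun h => (Finset.mem_union.mp h).elim ha' haB')
        linarith
      · -- a ∉ B, a' ∈ B : separated by both A \ B and B \ A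
        right
        have h1 : f A ≤ f (A \ B) := by
          rw [hAr]
          exact hsep _ a a' (Finset.mem_sdiff.mpr ⟨ha, haB⟩)
            (fun h => ha' (Finset.mem_sdiff.mp h).1)
        have h2 : f A ≤ f (B \ A) := by
          rw [hAr]
          exact hsep' _ a a' (fun h => (Finset.mem_sdiff.mp h).2 ha)
            (Finset.mem_sdiff.mpr ⟨haB', ha'⟩)
        linarith
      · -- a ∉ B, a' ∉ B : f A ≤ f (A ∪ B) and f A ≤ f (A \ B)
        have h1 : f A ≤ f (A ∪ B) := by
          rw [hAr]
          exact hsep _ a a' (Finset.mem_union.mpr (Or.inl ha))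
            (fun h => (Finset.mem_union.mp h).elim ha' haB')
        have h2 : f A ≤ f (A \ B) := by
          rw [hAr]
          exact hsep _ a a' (Finset.mem_sdiff.mpr ⟨ha, haB⟩)
            (fun h => ha' (Finset.mem_sdiff.mp h).1)
        rcases hwit B with hB0 | ⟨b, b', hb, hb', hBr⟩
        · left
          have := hnn (A ∩ B)
          linarith
        · by_cases hbA : b ∈ A
          · -- b ∈ A ∩ B
            left
            have h3 : f B ≤ f (A ∩ B) := by
              rw [hBr]
              exact hsep _ b b' (Finset.mem_inter.mpr ⟨hbA, hb⟩)
                (fun h => hb' (Finset.mem_inter.mp h).2)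
            linarith
          · -- b ∈ B \ A
            right
            have h3 : f B ≤ f (B \ A) := by
              rw [hBr]
              exact hsep _ b b' (Finset.mem_sdiff.mpr ⟨hb, hbA⟩)
                (fun h => hb' (Finset.mem_sdiff.mp h).1)
            linarith
  intro A B
  rcases le_total (f B) (f A) with h | h
  · exact key A B h
  · rcases key B A h with h1 | h1
    · left; rw [Finset.inter_comm, Finset.union_comm]; linarith
    · right; linarith
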